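/- Let γ > 0, μ ≥ 0, N ≥ 1, let k₀,…,k_{N−1} > 0 be time steps, and let W : ℝ → ℝ be continuous. For n = 0,…,N let ρⁿ, vⁿ, τⁿ, qⁿ : [0,1] → ℝ be twice continuously differentiable with vⁿ(0) = vⁿ(1) = 0 and qⁿ(0) = qⁿ(1) = 0. Write u^{n+½} := ½(uⁿ + u^{n+1}). Assume for each n = 0,…,N−1 the Crank–Nicolson-type equations hold pointwise on [0,1]: (a) (ρ^{n+1} − ρⁿ)/kₙ + ∂ₓ(ρ^{n+½} v^{n+½}) = 0; (b) ρ^{n+½}(v^{n+1} − vⁿ)/kₙ + ∂ₓ(ρ^{n+½}(v^{n+½})²) − ∂ₓ(ρ^{n+½}v^{n+½}) v^{n+½} + ρ^{n+½} ∂ₓτ^{n+½} − ½ ρ^{n+½} ∂ₓ((v^{n+½})²) − μ ∂ₓₓ v^{n+½} = 0; (c) W(ρ^{n+1}) − W(ρⁿ) = (ρ^{n+1} − ρⁿ) · ( τ^{n+½} + γ ∂ₓ q^{n+½} − ¼((v^{n+1})² + (vⁿ)²) ); (d) q^{n+1} = ∂ₓρ^{n+1}; and additionally q⁰ = ∂ₓρ⁰.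 Then for every n = 0,…,N: ∫₀¹ [ W(ρⁿ) + ½ρⁿ(vⁿ)² + (γ/2)(qⁿ)² ] dx = ∫₀¹ [ W(ρ⁰) + ½ρ⁰(v⁰)² + (γ/2)(q⁰)² ] dx − μ Σ_{j=0}^{n−1} kⱼ ∫₀¹ (∂ₓ v^{j+½})² dx. In particular for μ = 0 the discrete energy is exactly conserved, and for μ > 0 it is monotonically dissipated, with all dissipation due to viscosity. -/

import Mathlib

open Set MeasureTheory

theorem nsk_step
    (γ μ k : ℝ) (hk : 0 < k) (W : ℝ → ℝ) (hW : Continuous W)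
    (A A' B B' C C' D D' : ℝ → ℝ)
    (hA : ContDiff ℝ 2 A) (hA' : ContDiff ℝ 2 A')
    (hB : ContDiff ℝ 2 B) (hB' : ContDiff ℝ 2 B')
    (hC : ContDiff ℝ 2 C) (hC' : ContDiff ℝ 2 C')
    (hD : ContDiff ℝ 2 D) (hD' : ContDiff ℝ 2 D')
    (hB0 : B 0 = 0) (hB1 : B 1 = 0) (hB'0 : B' 0 = 0) (hB'1 : B' 1 = 0)
    (hD0 : D 0 = 0) (hD1 : D 1 = 0) (hD'0 : D' 0 = 0) (hD'1 : D' 1 = 0)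
    (ha : ∀ x ∈ Icc (0:ℝ) 1,
      (A' x - A x) / k + deriv (fun y => ((A y + A' y) / 2) * ((B y + B' y) / 2)) x = 0)
    (hb : ∀ x ∈ Icc (0:ℝ) 1,
      ((A x + A' x) / 2) * ((B' x - B x) / k)
        + deriv (fun y => ((A y + A' y) / 2) * ((B y + B' y) / 2) ^ 2) x
        - deriv (fun y => ((A y + A' y) / 2) * ((B y + B' y) / 2)) x * ((B x + B' x) / 2)
        + ((A x + A' x) / 2) * deriv (fun y => (C y + C' y) / 2) x
        - (1/2) * ((A x + A' x) / 2) * deriv (fun y => ((B y + B' y) / 2) ^ 2) x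
        - μ * deriv (deriv (fun y => (B y + B' y) / 2)) x = 0)
    (hc : ∀ x ∈ Icc (0:ℝ) 1,
      W (A' x) - W (A x)
        = (A' x - A x) * ((C x + C' x) / 2
            + γ * deriv (fun y => (D y + D' y) / 2) x
            - (1/4) * ((B' x) ^ 2 + (B x) ^ 2)))
    (hDA : ∀ x ∈ Icc (0:ℝ) 1, D x = deriv A x)
    (hDA' : ∀ x ∈ Icc (0:ℝ) 1, D' x = deriv A' x) :
    (∫ x in (0:ℝ)..1,
        (W (A' x) + (1/2) * A' x * (B' x) ^ 2 + (γ/2) * (D' x) ^ 2))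
      = (∫ x in (0:ℝ)..1,
          (W (A x) + (1/2) * A x * (B x) ^ 2 + (γ/2) * (D x) ^ 2))
        - μ * (k * ∫ x in (0:ℝ)..1,
            (deriv (fun y => (B y + B' y) / 2) x) ^ 2) := by
  have hk' : k ≠ 0 := ne_of_gt hk
  have hdiff : ∀ (f : ℝ → ℝ), ContDiff ℝ 2 f → ∀ y : ℝ, HasDerivAt f (deriv f y) y :=
    fun f hf y => ((hf.differentiable (by norm_num)) y).hasDerivAt
  have dA := hdiff A hA
  have dA' := hdiff A' hA'
  have dB := hdiff B hB
  have dB' := hdiff B' hB'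
  have dC := hdiff C hC
  have dC' := hdiff C' hC'
  have dD := hdiff D hD
  have dD' := hdiff D' hD'
  have hdB : ContDiff ℝ 1 (deriv B) := by
    have h2 : ContDiff ℝ (1+1) B := by norm_num [hB]
    exact (contDiff_succ_iff_deriv.mp h2).2.2
  have hdB' : ContDiff ℝ 1 (deriv B') := by
    have h2 : ContDiff ℝ (1+1) B' := by norm_num [hB']
    exact (contDiff_succ_iff_deriv.mp h2).2.2
  have dB2 : ∀ y : ℝ, HasDerivAt (deriv B) (deriv (deriv B) y) y :=
    fun y => ((hdB.differentiable one_ne_zero) y).hasDerivAt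
  have dB'2 : ∀ y : ℝ, HasDerivAt (deriv B') (deriv (deriv B') y) y :=
    fun y => ((hdB'.differentiable one_ne_zero) y).hasDerivAt
  have cA : Continuous (deriv A) := hA.continuous_deriv (by norm_num)
  have cA' : Continuous (deriv A') := hA'.continuous_deriv (by norm_num)
  have cB : Continuous (deriv B) := hB.continuous_deriv (by norm_num)
  have cB' : Continuous (deriv B') := hB'.continuous_deriv (by norm_num)
  have cC : Continuous (deriv C) := hC.continuous_deriv (by norm_num)
  have cC' : Continuous (deriv C') := hC'.continuous_deriv (by norm_num)
  have cD : Continuous (deriv D) := hD.continuous_deriv (by norm_num)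
  have cD' : Continuous (deriv D') := hD'.continuous_deriv (by norm_num)
  have cB2 : Continuous (deriv (deriv B)) := hdB.continuous_deriv le_rfl
  have cB'2 : Continuous (deriv (deriv B')) := hdB'.continuous_deriv le_rfl
  have hdw : deriv (fun y => (B y + B' y) / 2) = fun y => (deriv B y + deriv B' y) / 2 :=
    funext fun y => (((dB y).add (dB' y)).div_const 2).deriv
  -- integrability facts
  have cf : Continuous (fun x => W (A x) + (1/2) * A x * (B x) ^ 2 + (γ/2) * (D x) ^ 2) :=
    ((hW.comp hA.continuous).add
      ((continuous_const.mul hA.continuous).mul (hB.continuous.pow 2))).add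
      (continuous_const.mul (hD.continuous.pow 2))
  have cf' : Continuous (fun x => W (A' x) + (1/2) * A' x * (B' x) ^ 2 + (γ/2) * (D' x) ^ 2) :=
    ((hW.comp hA'.continuous).add
      ((continuous_const.mul hA'.continuous).mul (hB'.continuous.pow 2))).add
      (continuous_const.mul (hD'.continuous.pow 2))
  have cw2 : Continuous (fun x => ((deriv B x + deriv B' x) / 2) ^ 2) :=
    ((cB.add cB').div_const 2).pow 2
  have cE : Continuous (fun x : ℝ =>
      -(k * ((((deriv A x + deriv A' x) / 2) * ((B x + B' x) / 2)
              + ((A x + A' x) / 2) * ((deriv B x + deriv B' x) / 2)) * ((C x + C' x) / 2)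
            + ((A x + A' x) / 2) * ((B x + B' x) / 2) * ((deriv C x + deriv C' x) / 2)))
        + μ * k * (((deriv B x + deriv B' x) / 2) * ((deriv B x + deriv B' x) / 2)
            + ((B x + B' x) / 2) * ((deriv (deriv B) x + deriv (deriv B') x) / 2))
        + γ * (((deriv D x + deriv D' x) / 2) * (A' x - A x)
            + ((D x + D' x) / 2) * (deriv A' x - deriv A x))) := by
    have c1 : Continuous A := hA.continuous
    have c2 : Continuous A' := hA'.continuous
    have c3 : Continuous B := hB.continuous
    have c4 : Continuous B' := hB'.continuous
    have c5 : Continuous C := hC.continuous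
    have c6 : Continuous C' := hC'.continuous
    have c7 : Continuous D := hD.continuous
    have c8 : Continuous D' := hD'.continuous
    fun_prop
  -- fundamental theorem of calculus for the flux function H
  have hHE : ∀ x ∈ uIcc (0:ℝ) 1,
      HasDerivAt (fun y : ℝ =>
        -(k * (((A y + A' y) / 2) * ((B y + B' y) / 2) * ((C y + C' y) / 2)))
          + μ * k * (((B y + B' y) / 2) * ((deriv B y + deriv B' y) / 2))
          + γ * (((D y + D' y) / 2) * (A' y - A y)))
        (-(k * ((((deriv A x + deriv A' x) / 2) * ((B x + B' x) / 2)
              + ((A x + A' x) / 2) * ((deriv B x + deriv B' x) / 2)) * ((C x + C' x) / 2)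
            + ((A x + A' x) / 2) * ((B x + B' x) / 2) * ((deriv C x + deriv C' x) / 2)))
        + μ * k * (((deriv B x + deriv B' x) / 2) * ((deriv B x + deriv B' x) / 2)
            + ((B x + B' x) / 2) * ((deriv (deriv B) x + deriv (deriv B') x) / 2))
        + γ * (((deriv D x + deriv D' x) / 2) * (A' x - A x)
            + ((D x + D' x) / 2) * (deriv A' x - deriv A x))) x := by
    intro x _
    exact (((((((dA x).add (dA' x)).div_const 2).mul
        (((dB x).add (dB' x)).div_const 2)).mul
        (((dC x).add (dC' x)).div_const 2)).const_mul k).neg.add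
        (((((dB x).add (dB' x)).div_const 2).mul
          (((dB2 x).add (dB'2 x)).div_const 2)).const_mul (μ * k))).add
        (((((dD x).add (dD' x)).div_const 2).mul ((dA' x).sub (dA x))).const_mul γ)
  have hFTC : (∫ x in (0:ℝ)..1,
      (-(k * ((((deriv A x + deriv A' x) / 2) * ((B x + B' x) / 2)
              + ((A x + A' x) / 2) * ((deriv B x + deriv B' x) / 2)) * ((C x + C' x) / 2)
            + ((A x + A' x) / 2) * ((B x + B' x) / 2) * ((deriv C x + deriv C' x) / 2)))
        + μ * k * (((deriv B x + deriv B' x) / 2) * ((deriv B x + deriv B' x) / 2)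
            + ((B x + B' x) / 2) * ((deriv (deriv B) x + deriv (deriv B') x) / 2))
        + γ * (((deriv D x + deriv D' x) / 2) * (A' x - A x)
            + ((D x + D' x) / 2) * (deriv A' x - deriv A x)))) = 0 := by
    rw [intervalIntegral.integral_eq_sub_of_hasDerivAt hHE (cE.intervalIntegrable 0 1)]
    norm_num [hB0, hB1, hB'0, hB'1, hD0, hD1, hD'0, hD'1]
  -- pointwise identity on [0,1]
  have hpt : EqOn
      (fun x => (W (A' x) + (1/2) * A' x * (B' x) ^ 2 + (γ/2) * (D' x) ^ 2)
        - (W (A x) + (1/2) * A x * (B x) ^ 2 + (γ/2) * (D x) ^ 2))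
      (fun x =>
        (-(k * ((((deriv A x + deriv A' x) / 2) * ((B x + B' x) / 2)
              + ((A x + A' x) / 2) * ((deriv B x + deriv B' x) / 2)) * ((C x + C' x) / 2)
            + ((A x + A' x) / 2) * ((B x + B' x) / 2) * ((deriv C x + deriv C' x) / 2)))
        + μ * k * (((deriv B x + deriv B' x) / 2) * ((deriv B x + deriv B' x) / 2)
            + ((B x + B' x) / 2) * ((deriv (deriv B) x + deriv (deriv B') x) / 2))
        + γ * (((deriv D x + deriv D' x) / 2) * (A' x - A x)
            + ((D x + D' x) / 2) * (deriv A' x - deriv A x)))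
        - μ * k * ((deriv B x + deriv B' x) / 2) ^ 2)
      (uIcc (0:ℝ) 1) := by
    rw [uIcc_of_le (by norm_num : (0:ℝ) ≤ 1)]
    intro x hx
    simp only
    have hax := ha x hx
    have hbx := hb x hx
    have hcx := hc x hx
    have d1 : deriv (fun y => ((A y + A' y) / 2) * ((B y + B' y) / 2)) x
        = (deriv A x + deriv A' x) / 2 * ((B x + B' x) / 2)
          + (A x + A' x) / 2 * ((deriv B x + deriv B' x) / 2) :=
      ((((dA x).add (dA' x)).div_const 2).mul (((dB x).add (dB' x)).div_const 2)).deriv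
    have d2 : deriv (fun y => ((A y + A' y) / 2) * ((B y + B' y) / 2) ^ 2) x = _ := ((((dA x).add (dA' x)).div_const 2).mul
      ((((dB x).add (dB' x)).div_const 2).pow 2)).deriv
    have d3 : deriv (fun y => (C y + C' y) / 2) x = (deriv C x + deriv C' x) / 2 :=
      (((dC x).add (dC' x)).div_const 2).deriv
    have d4 : deriv (fun y => ((B y + B' y) / 2) ^ 2) x = _ := ((((dB x).add (dB' x)).div_const 2).pow 2).deriv
    have d5 : deriv (deriv (fun y => (B y + B' y) / 2)) x
        = (deriv (deriv B) x + deriv (deriv B') x) / 2 := by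
      rw [hdw]
      exact (((dB2 x).add (dB'2 x)).div_const 2).deriv
    have d6 : deriv (fun y => (D y + D' y) / 2) x = (deriv D x + deriv D' x) / 2 :=
      (((dD x).add (dD' x)).div_const 2).deriv
    rw [d1, d2, d3, d4, d5] at hbx
    rw [d1] at hax
    rw [d6] at hcx
    norm_num at hbx
    -- turn (a) into an explicit formula for A' x - A x
    have e1 : A' x - A x
        = -k * ((deriv A x + deriv A' x) / 2 * ((B x + B' x) / 2)
            + (A x + A' x) / 2 * ((deriv B x + deriv B' x) / 2)) := by
      have h : (A' x - A x) / k
          = -((deriv A x + deriv A' x) / 2 * ((B x + B' x) / 2)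
            + (A x + A' x) / 2 * ((deriv B x + deriv B' x) / 2)) := by linarith
      rw [div_eq_iff hk'] at h
      rw [h]; ring
    -- turn (b) into an explicit formula for m Δv
    have e2 : (A x + A' x) / 2 * (B' x - B x)
        = -k * ((deriv A x + deriv A' x) / 2 * ((B x + B' x) / 2) ^ 2
            + (A x + A' x) / 2 * (2 * ((B x + B' x) / 2) * ((deriv B x + deriv B' x) / 2))
            - ((deriv A x + deriv A' x) / 2 * ((B x + B' x) / 2)
              + (A x + A' x) / 2 * ((deriv B x + deriv B' x) / 2)) * ((B x + B' x) / 2)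
            + (A x + A' x) / 2 * ((deriv C x + deriv C' x) / 2)
            - (1/2) * ((A x + A' x) / 2)
                * (2 * ((B x + B' x) / 2) * ((deriv B x + deriv B' x) / 2))
            - μ * ((deriv (deriv B) x + deriv (deriv B') x) / 2)) := by
      have h : (A x + A' x) / 2 * ((B' x - B x) / k)
          = -((deriv A x + deriv A' x) / 2 * ((B x + B' x) / 2) ^ 2
            + (A x + A' x) / 2 * (2 * ((B x + B' x) / 2) * ((deriv B x + deriv B' x) / 2))
            - ((deriv A x + deriv A' x) / 2 * ((B x + B' x) / 2)
              + (A x + A' x) / 2 * ((deriv B x + deriv B' x) / 2)) * ((B x + B' x) / 2)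
            + (A x + A' x) / 2 * ((deriv C x + deriv C' x) / 2)
            - (1/2) * ((A x + A' x) / 2)
                * (2 * ((B x + B' x) / 2) * ((deriv B x + deriv B' x) / 2))
            - μ * ((deriv (deriv B) x + deriv (deriv B') x) / 2)) := by linarith
      rw [mul_div_assoc'] at h
      rw [div_eq_iff hk'] at h
      rw [h]; ring
    rw [hDA x hx, hDA' x hx]
    linear_combination hcx + ((C x + C' x) / 2) * e1 + ((B x + B' x) / 2) * e2
  -- assemble the integral identity
  have hsub : (∫ x in (0:ℝ)..1,
        ((W (A' x) + (1/2) * A' x * (B' x) ^ 2 + (γ/2) * (D' x) ^ 2)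
          - (W (A x) + (1/2) * A x * (B x) ^ 2 + (γ/2) * (D x) ^ 2)))
      = (∫ x in (0:ℝ)..1,
          (W (A' x) + (1/2) * A' x * (B' x) ^ 2 + (γ/2) * (D' x) ^ 2))
        - (∫ x in (0:ℝ)..1,
          (W (A x) + (1/2) * A x * (B x) ^ 2 + (γ/2) * (D x) ^ 2)) :=
    intervalIntegral.integral_sub (cf'.intervalIntegrable 0 1) (cf.intervalIntegrable 0 1)
  have hsplit : (∫ x in (0:ℝ)..1,
        ((-(k * ((((deriv A x + deriv A' x) / 2) * ((B x + B' x) / 2)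
              + ((A x + A' x) / 2) * ((deriv B x + deriv B' x) / 2)) * ((C x + C' x) / 2)
            + ((A x + A' x) / 2) * ((B x + B' x) / 2) * ((deriv C x + deriv C' x) / 2)))
        + μ * k * (((deriv B x + deriv B' x) / 2) * ((deriv B x + deriv B' x) / 2)
            + ((B x + B' x) / 2) * ((deriv (deriv B) x + deriv (deriv B') x) / 2))
        + γ * (((deriv D x + deriv D' x) / 2) * (A' x - A x)
            + ((D x + D' x) / 2) * (deriv A' x - deriv A x)))
          - μ * k * ((deriv B x + deriv B' x) / 2) ^ 2))
      = (∫ x in (0:ℝ)..1,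
          (-(k * ((((deriv A x + deriv A' x) / 2) * ((B x + B' x) / 2)
              + ((A x + A' x) / 2) * ((deriv B x + deriv B' x) / 2)) * ((C x + C' x) / 2)
            + ((A x + A' x) / 2) * ((B x + B' x) / 2) * ((deriv C x + deriv C' x) / 2)))
        + μ * k * (((deriv B x + deriv B' x) / 2) * ((deriv B x + deriv B' x) / 2)
            + ((B x + B' x) / 2) * ((deriv (deriv B) x + deriv (deriv B') x) / 2))
        + γ * (((deriv D x + deriv D' x) / 2) * (A' x - A x)
            + ((D x + D' x) / 2) * (deriv A' x - deriv A x))))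
        - μ * k * (∫ x in (0:ℝ)..1, ((deriv B x + deriv B' x) / 2) ^ 2) := by
    rw [intervalIntegral.integral_sub (cE.intervalIntegrable 0 1)
      (show IntervalIntegrable (fun x => μ * k * ((deriv B x + deriv B' x) / 2) ^ 2) volume 0 1 from (continuous_const.mul cw2).intervalIntegrable 0 1),
      intervalIntegral.integral_const_mul]
  have hmain := intervalIntegral.integral_congr (μ := volume) hpt
  rw [hsub, hsplit, hFTC] at hmain
  simp only [hdw]
  linarith [hmain]


/-- Discrete energy balance for the Crank–Nicolson-type temporally discrete,
spatially continuous scheme for the mixed formulation of the 1D NSK system on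
`[0,1]`: the discrete energy at level `n` equals the initial energy minus the
accumulated viscous dissipation `μ Σⱼ kⱼ ∫ (∂ₓ v^{j+½})²`. In particular for
`μ = 0` the energy is exactly conserved, and for `μ > 0` it is monotonically
dissipated, all dissipation being due to viscosity. -/
theorem time_discrete_energy_dissipation
    (γ μ : ℝ) (hγ : 0 < γ) (hμ : 0 ≤ μ)
    (N : ℕ) (hN : 1 ≤ N) (k : ℕ → ℝ) (hk : ∀ n < N, 0 < k n)
    (W : ℝ → ℝ) (hW : Continuous W)
    (ρ v τ q : ℕ → ℝ → ℝ)
    (hρ : ∀ n ≤ N, ContDiff ℝ 2 (ρ n))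
    (hv : ∀ n ≤ N, ContDiff ℝ 2 (v n))
    (hτ : ∀ n ≤ N, ContDiff ℝ 2 (τ n))
    (hq : ∀ n ≤ N, ContDiff ℝ 2 (q n))
    -- boundary conditions
    (hbv : ∀ n ≤ N, v n 0 = 0 ∧ v n 1 = 0)
    (hbq : ∀ n ≤ N, q n 0 = 0 ∧ q n 1 = 0)
    -- (a) discrete mass equation
    (ha : ∀ n < N, ∀ x ∈ Icc (0:ℝ) 1,
      (ρ (n + 1) x - ρ n x) / k n
        + deriv (fun y => ((ρ n y + ρ (n + 1) y) / 2)
            * ((v n y + v (n + 1) y) / 2)) x = 0)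
    -- (b) discrete momentum equation
    (hb : ∀ n < N, ∀ x ∈ Icc (0:ℝ) 1,
      ((ρ n x + ρ (n + 1) x) / 2) * ((v (n + 1) x - v n x) / k n)
        + deriv (fun y => ((ρ n y + ρ (n + 1) y) / 2)
            * ((v n y + v (n + 1) y) / 2) ^ 2) x
        - deriv (fun y => ((ρ n y + ρ (n + 1) y) / 2)
            * ((v n y + v (n + 1) y) / 2)) x * ((v n x + v (n + 1) x) / 2)
        + ((ρ n x + ρ (n + 1) x) / 2)
            * deriv (fun y => (τ n y + τ (n + 1) y) / 2) x
        - (1/2) * ((ρ n x + ρ (n + 1) x) / 2)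
            * deriv (fun y => ((v n y + v (n + 1) y) / 2) ^ 2) x
        - μ * deriv (deriv (fun y => (v n y + v (n + 1) y) / 2)) x = 0)
    -- (c) discrete chemical-potential equation (multiplied-out form)
    (hc : ∀ n < N, ∀ x ∈ Icc (0:ℝ) 1,
      W (ρ (n + 1) x) - W (ρ n x)
        = (ρ (n + 1) x - ρ n x)
          * ((τ n x + τ (n + 1) x) / 2
              + γ * deriv (fun y => (q n y + q (n + 1) y) / 2) x
              - (1/4) * ((v (n + 1) x) ^ 2 + (v n x) ^ 2)))
    -- (d) gradient equation, and its validity at the initial level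
    (hd : ∀ n < N, ∀ x ∈ Icc (0:ℝ) 1, q (n + 1) x = deriv (ρ (n + 1)) x)
    (hq0 : ∀ x ∈ Icc (0:ℝ) 1, q 0 x = deriv (ρ 0) x) :
    ∀ n ≤ N,
      (∫ x in (0:ℝ)..1,
          (W (ρ n x) + (1/2) * ρ n x * (v n x) ^ 2 + (γ/2) * (q n x) ^ 2))
        = (∫ x in (0:ℝ)..1,
            (W (ρ 0 x) + (1/2) * ρ 0 x * (v 0 x) ^ 2 + (γ/2) * (q 0 x) ^ 2))
          - μ * ∑ j ∈ Finset.range n,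
              k j * ∫ x in (0:ℝ)..1,
                (deriv (fun y => (v j y + v (j + 1) y) / 2) x) ^ 2 := by
  intro n hn
  induction n with
  | zero => simp
  | succ m ih =>
    have hmN : m < N := Nat.lt_of_lt_of_le (Nat.lt_succ_self m) hn
    have hqm : ∀ x ∈ Icc (0:ℝ) 1, q m x = deriv (ρ m) x := by
      match m with
      | 0 => exact hq0
      | Nat.succ p => exact hd p (Nat.lt_of_succ_lt hmN)
    have hstep := nsk_step γ μ (k m) (hk m hmN) W hW
      (ρ m) (ρ (m+1)) (v m) (v (m+1)) (τ m) (τ (m+1)) (q m) (q (m+1))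
      (hρ m hmN.le) (hρ (m+1) hn) (hv m hmN.le) (hv (m+1) hn)
      (hτ m hmN.le) (hτ (m+1) hn) (hq m hmN.le) (hq (m+1) hn)
      (hbv m hmN.le).1 (hbv m hmN.le).2 (hbv (m+1) hn).1 (hbv (m+1) hn).2
      (hbq m hmN.le).1 (hbq m hmN.le).2 (hbq (m+1) hn).1 (hbq (m+1) hn).2
      (ha m hmN) (hb m hmN) (hc m hmN) hqm (hd m hmN)
    rw [Finset.sum_range_succ, hstep, ih (Nat.le_of_succ_le hn)]
    ring
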